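/- Conversely, if f is holomorphic on a connected open set U ⊆ ℂ with f' nonvanishing and Schw f ≡ 0 on U, then f agrees on U with a Möbius transformation, i.e., there exist α,β,γ,δ ∈ ℂ with αδ - βγ ≠ 0 and f(z) = (αz+β)/(γz+δ) for all z ∈ U. -/

import Mathlib

open Metric Set Filter

open Metric Set Filter

/-- A holomorphic function with zero derivative on an open preconnected set is constant. -/
lemma constOnU {U : Set ℂ} (hU : IsOpen U) (hUc : IsPreconnected U) {g : ℂ → ℂ}
    (hg : AnalyticOnNhd ℂ g U) (h0 : ∀ z ∈ U, deriv g z = 0) {z0 : ℂ} (hz0 : z0 ∈ U) :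
    ∀ z ∈ U, g z = g z0 := by
  have key : ∀ w ∈ U, g =ᶠ[nhds w] fun _ => g w := by
    intro w hw
    obtain ⟨r, hr, hball⟩ := Metric.isOpen_iff.1 hU w hw
    have hdiff : DifferentiableOn ℂ g (ball w r) := fun z hz =>
      ((hg z (hball hz)).differentiableAt).differentiableWithinAt
    have hfd : ∀ z ∈ ball w r, fderivWithin ℂ g (ball w r) z = 0 := by
      intro z hz
      rw [fderivWithin_of_isOpen isOpen_ball hz]
      have hd : HasDerivAt g 0 z := by
        have := (hg z (hball hz)).differentiableAt.hasDerivAt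
        rwa [h0 z (hball hz)] at this
      have : HasFDerivAt g (0 : ℂ →L[ℂ] ℂ) z := by
        have h2 := hd.hasFDerivAt
        rwa [show ContinuousLinearMap.toSpanSingleton ℂ (0:ℂ) = 0 by ext; simp] at h2
      exact this.fderiv
    filter_upwards [ball_mem_nhds w hr] with z hz
    exact (convex_ball w r).is_const_of_fderivWithin_eq_zero hdiff hfd hz (mem_ball_self hr)
  have := AnalyticOnNhd.eqOn_of_preconnected_of_eventuallyEq hg analyticOnNhd_const hUc hz0
    (key z0 hz0)
  exact fun z hz => this hz


lemma segment_contra (u : ℂ → ℂ) (U : Set ℂ) (hU : IsOpen U) (w : ℂ) (hw : w ∈ U)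
    (hcont : ContinuousAt u w) (hu' : ∀ z ∈ U, HasDerivAt u (u z ^ 2 / 2) z)
    (hw0 : u w = 0) (h : ∀ᶠ z in nhdsWithin w {w}ᶜ, u z ≠ 0) : False := by
  have hUn : U ∈ nhds w := hU.mem_nhds hw
  have h' : ∀ᶠ z in nhdsWithin w {w}ᶜ, u z ≠ 0 ∧ z ∈ U := by
    filter_upwards [h, mem_nhdsWithin_of_mem_nhds hUn] with z h1 h2
    exact ⟨h1, h2⟩
  obtain ⟨ε, hε, hball⟩ := Metric.mem_nhdsWithin_iff.1 h'
  have hmem : ∀ t : ℝ, t ∈ Ioo (0:ℝ) ε → u (w + (t:ℂ)) ≠ 0 ∧ w + (t:ℂ) ∈ U := by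
    intro t ht
    apply hball
    constructor
    · have h1 : (w + (t:ℂ)) - w = (t:ℂ) := by ring
      rw [mem_ball, Complex.dist_eq, h1, Complex.norm_real, Real.norm_eq_abs, abs_of_pos ht.1]
      exact ht.2
    · simp only [mem_compl_iff, mem_singleton_iff]
      intro hcon
      have ht0 : (t:ℂ) = 0 := by linear_combination hcon
      exact absurd (by exact_mod_cast ht0) (ne_of_gt ht.1)
  -- ψ is constant on Ioo 0 ε
  set ψ : ℝ → ℂ := fun t => (u (w + (t:ℂ)))⁻¹ + (w + (t:ℂ)) / 2 with hψ
  have hψ' : ∀ t ∈ Ioo (0:ℝ) ε, HasDerivAt ψ 0 t := by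
    intro t ht
    obtain ⟨hne, hmemU⟩ := hmem t ht
    have hin : HasDerivAt (fun t : ℝ => w + (t:ℂ)) (1:ℂ) t := by
      have h0 : HasDerivAt (fun t : ℝ => (t:ℂ)) ((Complex.ofRealCLM : ℝ →L[ℝ] ℂ) 1) t :=
        Complex.ofRealCLM.hasDerivAt
      simpa using h0.const_add w
    have hout : HasDerivAt (fun z : ℂ => (u z)⁻¹ + z / 2) 0 (w + (t:ℂ)) := by
      have h1 := (hu' _ hmemU).inv hne
      have h2 : HasDerivAt (fun z : ℂ => z / 2) (1 / 2 : ℂ) (w + (t:ℂ)) := by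
        simpa using (hasDerivAt_id ((w:ℂ) + t)).div_const 2
      have h3 := h1.add h2
      refine h3.congr_deriv (Eq.symm ?_)
      field_simp
      ring
    have := hout.scomp t hin
    exact this.congr_deriv (by simp)
  have hconst : ∀ t ∈ Ioo (0:ℝ) ε, ψ t = ψ (ε/2) := by
    have hdiff : DifferentiableOn ℝ ψ (Ioo 0 ε) := fun t ht =>
      ((hψ' t ht).differentiableAt).differentiableWithinAt
    have hfd : ∀ t ∈ Ioo (0:ℝ) ε, fderivWithin ℝ ψ (Ioo 0 ε) t = 0 := by
      intro t ht
      rw [fderivWithin_of_isOpen isOpen_Ioo ht]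
      have : HasFDerivAt ψ (0 : ℝ →L[ℝ] ℂ) t := by
        have h2 := (hψ' t ht).hasFDerivAt
        rwa [show ContinuousLinearMap.toSpanSingleton ℝ (0:ℂ) = 0 by ext; simp] at h2
      exact this.fderiv
    intro t ht
    exact (convex_Ioo 0 ε).is_const_of_fderivWithin_eq_zero hdiff hfd ht
      ⟨half_pos hε, half_lt_self hε⟩
  set κ := ψ (ε/2) with hκ
  have hprod : ∀ t ∈ Ioo (0:ℝ) ε, u (w + (t:ℂ)) * (κ - (w + (t:ℂ)) / 2) = 1 := by
    intro t ht
    obtain ⟨hne, _⟩ := hmem t ht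
    have h1 := hconst t ht
    rw [hψ] at h1
    simp only at h1
    have h2 : (u (w + (t:ℂ)))⁻¹ = κ - (w + (t:ℂ)) / 2 := by
      rw [hκ]; linear_combination h1
    rw [← h2]
    field_simp
  -- limit as t → 0⁺
  have hL1 : Tendsto (fun t : ℝ => u (w + (t:ℂ)) * (κ - (w + (t:ℂ)) / 2))
      (nhdsWithin (0:ℝ) (Ioi (0:ℝ))) (nhds 0) := by
    have hin : Tendsto (fun t : ℝ => w + (t:ℂ)) (nhdsWithin (0:ℝ) (Ioi (0:ℝ))) (nhds w) := by
      have : Tendsto (fun t : ℝ => w + (t:ℂ)) (nhds 0) (nhds (w + ((0:ℝ):ℂ))) :=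
        (continuous_const.add Complex.continuous_ofReal).tendsto 0
      simpa using this.mono_left nhdsWithin_le_nhds
    have h1 : Tendsto (fun t : ℝ => u (w + (t:ℂ))) (nhdsWithin (0:ℝ) (Ioi (0:ℝ))) (nhds 0) := by
      have := hcont.tendsto.comp hin
      rwa [hw0] at this
    have h2 : Tendsto (fun t : ℝ => κ - (w + (t:ℂ)) / 2) (nhdsWithin (0:ℝ) (Ioi (0:ℝ)))
        (nhds (κ - w / 2)) := by
      exact (tendsto_const_nhds (x := κ)).sub (hin.div_const 2)
    have := h1.mul h2
    simpa using this
  have hL2 : Tendsto (fun t : ℝ => u (w + (t:ℂ)) * (κ - (w + (t:ℂ)) / 2))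
      (nhdsWithin (0:ℝ) (Ioi (0:ℝ))) (nhds 1) := by
    have hev : ∀ᶠ (t : ℝ) in nhdsWithin (0:ℝ) (Ioi (0:ℝ)),
        u (w + (t:ℂ)) * (κ - (w + (t:ℂ)) / 2) = 1 := by
      filter_upwards [Ioo_mem_nhdsGT_of_mem (left_mem_Ico.2 hε)] with t ht
      exact hprod t ht
    exact Tendsto.congr' (by filter_upwards [hev] with t ht; exact ht.symm) tendsto_const_nhds
  exact zero_ne_one (tendsto_nhds_unique hL1 hL2)

/-- The Schwarzian derivative `f'''/f' - (3/2)(f''/f')²`. -/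
noncomputable def Schw (f : ℂ → ℂ) (z : ℂ) : ℂ :=
  deriv (deriv (deriv f)) z / deriv f z - (3 / 2) * (deriv (deriv f) z / deriv f z) ^ 2

theorem schwarzian_zero_implies_moebius (f : ℂ → ℂ) (U : Set ℂ)
    (hU : IsOpen U) (hUc : IsConnected U)
    (hf : DifferentiableOn ℂ f U) (hf' : ∀ z ∈ U, deriv f z ≠ 0)
    (hS : ∀ z ∈ U, Schw f z = 0) :
    ∃ α β γ δ : ℂ, α * δ - β * γ ≠ 0 ∧
      ∀ z ∈ U, f z = (α * z + β) / (γ * z + δ) := by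
  obtain ⟨⟨z0, hz0⟩, hUpc⟩ := hUc
  have hfa : AnalyticOnNhd ℂ f U := hf.analyticOnNhd hU
  have hF1a : AnalyticOnNhd ℂ (deriv f) U := hfa.deriv
  have hF2a : AnalyticOnNhd ℂ (deriv (deriv f)) U := hF1a.deriv
  set u : ℂ → ℂ := fun z => deriv (deriv f) z / deriv f z with hu_def
  have hua : AnalyticOnNhd ℂ u U := fun z hz => (hF2a z hz).div (hF1a z hz) (hf' z hz)
  have hu' : ∀ z ∈ U, HasDerivAt u (u z ^ 2 / 2) z := by
    intro z hz
    have hc := hf' z hz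
    have h1 : HasDerivAt (deriv f) (deriv (deriv f) z) z :=
      (hF1a z hz).differentiableAt.hasDerivAt
    have h2 : HasDerivAt (deriv (deriv f)) (deriv (deriv (deriv f)) z) z :=
      (hF2a z hz).differentiableAt.hasDerivAt
    have hd := h2.div h1 hc
    have hs := hS z hz
    unfold Schw at hs
    refine hd.congr_deriv (Eq.symm ?_)
    rw [hu_def]
    simp only
    field_simp at hs ⊢
    linear_combination (-1 : ℂ) * hs
  by_cases hex : ∃ w ∈ U, u w = 0
  · -- u ≡ 0 on U, so f is affine
    obtain ⟨w, hw, hw0⟩ := hex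
    have hev : u =ᶠ[nhds w] 0 := by
      rcases (hua w hw).eventually_eq_zero_or_eventually_ne_zero with h | h
      · exact h
      · exact absurd (segment_contra u U hU w hw (hua w hw).continuousAt hu' hw0 h) id
    have huz : ∀ z ∈ U, u z = 0 := fun z hz =>
      (hua.eqOn_zero_of_preconnected_of_eventuallyEq_zero hUpc hw hev) hz
    have hF2z : ∀ z ∈ U, deriv (deriv f) z = 0 := by
      intro z hz
      have h := huz z hz
      rw [hu_def] at h
      simp only at h
      exact (div_eq_zero_iff.1 h).resolve_right (fun hc => hf' z hz hc)
    have hc1 : ∀ z ∈ U, deriv f z = deriv f z0 := constOnU hU hUpc hF1a hF2z hz0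
    set c := deriv f z0 with hcdef
    have hcne : c ≠ 0 := hf' z0 hz0
    have haff : ∀ z ∈ U, f z - c * z = f z0 - c * z0 := by
      apply constOnU hU hUpc
      · exact fun z hz => (hfa z hz).sub (analyticAt_const.mul analyticAt_id)
      · intro z hz
        have h1 : HasDerivAt (fun z => f z - c * z) (deriv f z - c) z := by
          have := ((hfa z hz).differentiableAt.hasDerivAt).sub
            ((hasDerivAt_id z).const_mul c)
          exact this.congr_deriv (by simp)
        rw [h1.deriv, hc1 z hz, sub_self]
      · exact hz0
    refine ⟨c, f z0 - c * z0, 0, 1, by simpa using hcne, ?_⟩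
    intro z hz
    have h := haff z hz
    field_simp
    linear_combination h
  · push_neg at hex
    -- u never zero: u z = 2/(b - z)
    have hinv' : ∀ z ∈ U, HasDerivAt (fun z => (u z)⁻¹ + z / 2) 0 z := by
      intro z hz
      have h1 := (hu' z hz).inv (hex z hz)
      have h2 : HasDerivAt (fun z : ℂ => z / 2) (1 / 2 : ℂ) z := by
        simpa using (hasDerivAt_id z).div_const 2
      have h3 := h1.add h2
      refine h3.congr_deriv (Eq.symm ?_)
      obtain ⟨v, hv, hvne⟩ : ∃ v, u z = v ∧ v ≠ 0 := ⟨u z, rfl, hex z hz⟩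
      rw [hv]
      field_simp
      ring
    have hha : AnalyticOnNhd ℂ (fun z => (u z)⁻¹ + z / 2) U := fun z hz =>
      ((hua z hz).inv (hex z hz)).add (analyticAt_id.div analyticAt_const two_ne_zero)
    have hconst : ∀ z ∈ U, (u z)⁻¹ + z / 2 = (u z0)⁻¹ + z0 / 2 :=
      constOnU hU hUpc hha (fun z hz => (hinv' z hz).deriv) hz0
    set b : ℂ := 2 * ((u z0)⁻¹ + z0 / 2) with hbdef
    have hzb : ∀ z ∈ U, z ≠ b ∧ u z * (b - z) = 2 := by
      intro z hz
      have h := hconst z hz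
      have hne : (u z)⁻¹ ≠ 0 := inv_ne_zero (hex z hz)
      have hbz : b - z = 2 * (u z)⁻¹ := by rw [hbdef, ← h]; ring
      constructor
      · intro hzbe
        rw [hzbe] at hbz hne
        simp only [sub_self] at hbz
        exact hne (by linear_combination -hbz/2)
      · rw [hbz, mul_left_comm, mul_inv_cancel₀ (hex z hz), mul_one]
    have hF2u : ∀ z ∈ U, deriv (deriv f) z = u z * deriv f z := by
      intro z hz
      rw [hu_def]
      field_simp [hf' z hz]
    -- deriv f z * (z - b)^2 is constant
    have hg3 : ∀ z ∈ U, deriv f z * (z - b) ^ 2 = deriv f z0 * (z0 - b) ^ 2 := by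
      apply constOnU hU hUpc
      · exact fun z hz => (hF1a z hz).mul (((analyticAt_id).sub analyticAt_const).pow 2)
      · intro z hz
        have h1 : HasDerivAt (fun z => deriv f z * (z - b) ^ 2)
            (deriv (deriv f) z * (z - b) ^ 2 + deriv f z * (2 * (z - b))) z := by
          have hid : HasDerivAt (fun z : ℂ => (z - b) ^ 2) (2 * (z - b)) z := by
            have := ((hasDerivAt_id z).sub_const b).pow 2
            exact this.congr_deriv (by simp)
          exact ((hF1a z hz).differentiableAt.hasDerivAt).mul hid
        rw [h1.deriv, hF2u z hz]
        obtain ⟨hzb1, hzb2⟩ := hzb z hz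
        have hbz0 : b - z ≠ 0 := sub_ne_zero.2 (Ne.symm hzb1)
        have hu2 : u z = 2 / (b - z) := (eq_div_iff hbz0).2 hzb2
        rw [hu2]
        field_simp
        ring
      · exact hz0
    set c : ℂ := deriv f z0 * (z0 - b) ^ 2 with hcdef
    have hz0b : z0 ≠ b := (hzb z0 hz0).1
    have hcne : c ≠ 0 := mul_ne_zero (hf' z0 hz0) (pow_ne_zero 2 (sub_ne_zero.2 hz0b))
    -- f z + c / (z - b) is constant
    have hg4 : ∀ z ∈ U, f z + c / (z - b) = f z0 + c / (z0 - b) := by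
      apply constOnU hU hUpc
      · intro z hz
        refine (hfa z hz).add ?_
        exact analyticAt_const.div ((analyticAt_id).sub analyticAt_const)
          (sub_ne_zero.2 (hzb z hz).1)
      · intro z hz
        have hbz : z - b ≠ 0 := sub_ne_zero.2 (hzb z hz).1
        have hinv : HasDerivAt (fun z : ℂ => (z - b)⁻¹) (-1 / (z - b) ^ 2) z := by
          have := ((hasDerivAt_id z).sub_const b).inv hbz
          exact this.congr_deriv (by simp)
        have h1 : HasDerivAt (fun z => f z + c / (z - b))
            (deriv f z + c * (-1 / (z - b) ^ 2)) z := by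
          have h2 := ((hfa z hz).differentiableAt.hasDerivAt).add (hinv.const_mul c)
          exact h2
        rw [h1.deriv]
        have h3 := hg3 z hz
        field_simp
        linear_combination h3
      · exact hz0
    set d : ℂ := f z0 + c / (z0 - b) with hddef
    refine ⟨d, -(d * b) - c, 1, -b, ?_, ?_⟩
    · have h : d * -b - (-(d * b) - c) * 1 = c := by ring
      rw [h]; exact hcne
    · intro z hz
      have hbz : z - b ≠ 0 := sub_ne_zero.2 (hzb z hz).1
      have h := hg4 z hz
      have h2 : c / (z - b) = d - f z := by linear_combination h
      have hc2 : c = (d - f z) * (z - b) := (div_eq_iff hbz).1 h2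
      have hden : (1:ℂ) * z + -b = z - b := by ring
      rw [hden, eq_div_iff hbz]
      linear_combination hc2
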